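/- Let u ∈ H¹(ℝ), v ∈ L²(ℝ) real-valued, and suppose ‖∂_x u‖²_{L²} + ‖v‖²_{L²} ≤ -2∫ v|u|² dx + E₀ for some E₀ ∈ ℝ. If ‖u‖_{L²} ≤ r, then ‖∂_x u‖²_{L²} + ‖v‖²_{L²} ≤ 4 C⁸ r⁶ + 2 E₀, where C is the Gagliardo–Nirenberg constant in ‖f‖_{L⁴} ≤ C ‖f‖_{L²}^{3/4} ‖∂_x f‖_{L²}^{1/4}. -/

import Mathlib

open MeasureTheory

noncomputable def L2C (f : ℝ → ℂ) : ℝ := (eLpNorm f 2 (volume : Measure ℝ)).toReal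
noncomputable def L2R (f : ℝ → ℝ) : ℝ := (eLpNorm f 2 (volume : Measure ℝ)).toReal
noncomputable def L4C (f : ℝ → ℂ) : ℝ := (eLpNorm f 4 (volume : Measure ℝ)).toReal

/-- A priori `H¹×L²` bound for the focusing Schrödinger–Debye system:
if `‖∂ₓu‖₂² + ‖v‖₂² ≤ -2∫ v|u|² + E₀` and `‖u‖₂ ≤ r`, then
`‖∂ₓu‖₂² + ‖v‖₂² ≤ 4C⁸r⁶ + 2E₀`, `C` the Gagliardo–Nirenberg constant. -/
theorem stmt4 (u u' : ℝ → ℂ) (v : ℝ → ℝ) (C r E₀ : ℝ) (hC : 0 ≤ C) (hr : 0 ≤ r)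
    (hu : MemLp u 2 (volume : Measure ℝ)) (hu' : MemLp u' 2 (volume : Measure ℝ))
    (hu4 : MemLp u 4 (volume : Measure ℝ)) (hv : MemLp v 2 (volume : Measure ℝ))
    (hGN : L4C u ≤ C * L2C u ^ ((3:ℝ)/4) * L2C u' ^ ((1:ℝ)/4))
    (hE : L2C u' ^ 2 + L2R v ^ 2 ≤ -2 * (∫ x : ℝ, v x * ‖u x‖^2) + E₀)
    (hu2 : L2C u ≤ r) :
    L2C u' ^ 2 + L2R v ^ 2 ≤ 4 * C^8 * r^6 + 2 * E₀ := by
  set A := L2C u' with hA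
  set B := L2R v with hB
  set K := L2C u with hK
  have hA0 : 0 ≤ A := ENNReal.toReal_nonneg
  have hB0 : 0 ≤ B := ENNReal.toReal_nonneg
  have hK0 : 0 ≤ K := ENNReal.toReal_nonneg
  have hL40 : 0 ≤ L4C u := ENNReal.toReal_nonneg
  -- the function w = |u|²
  set w : ℝ → ℝ := fun x => ‖u x‖ ^ 2 with hw
  have hwm : AEStronglyMeasurable w (volume : Measure ℝ) := by
    have h := hu4.1.norm
    exact (h.mul h).congr (Filter.Eventually.of_forall fun x => (sq (‖u x‖)).symm)
  have hweq : eLpNorm w 2 (volume : Measure ℝ)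
      = eLpNorm u 4 (volume : Measure ℝ) ^ (2:ℝ) := by
    have hwr : w = fun x => ‖u x‖ ^ (2:ℝ) := by
      funext x
      show ‖u x‖ ^ 2 = ‖u x‖ ^ (2:ℝ)
      rw [← Real.rpow_natCast (‖u x‖) 2]
      norm_num
    rw [hwr, eLpNorm_norm_rpow u (by norm_num : (0:ℝ) < 2)]
    norm_num
  have hwfin : eLpNorm w 2 (volume : Measure ℝ) < ⊤ := by
    rw [hweq]
    exact ENNReal.rpow_lt_top_of_nonneg (by norm_num) hu4.2.ne
  have hw2 : MemLp w 2 (volume : Measure ℝ) := ⟨hwm, hwfin⟩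
  -- Hölder bound for the coupling integral
  have hpqr : (1 : ENNReal) / 1 = 1 / 2 + 1 / 2 := by
    rw [ENNReal.add_halves, one_div_one]
  have hprod : MemLp (v • w) 1 (volume : Measure ℝ) := hw2.smul hv
  have habs : |∫ x : ℝ, v x * ‖u x‖ ^ 2| ≤ B * (L4C u) ^ 2 := by
    have h1 : |∫ x : ℝ, v x * ‖u x‖ ^ 2| ≤ ∫ x : ℝ, ‖v x * ‖u x‖ ^ 2‖ := by
      calc |∫ x : ℝ, v x * ‖u x‖ ^ 2| = ‖∫ x : ℝ, v x * ‖u x‖ ^ 2‖ := (Real.norm_eq_abs _).symm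
        _ ≤ ∫ x : ℝ, ‖v x * ‖u x‖ ^ 2‖ := norm_integral_le_integral_norm _
    have h2 : ∫ x : ℝ, ‖v x * ‖u x‖ ^ 2‖
        = (eLpNorm (v • w) 1 (volume : Measure ℝ)).toReal := by
      have hfn : (fun x : ℝ => ‖v x * ‖u x‖ ^ 2‖) = fun x => ‖(v • w) x‖ := rfl
      rw [hfn, integral_norm_eq_lintegral_enorm hprod.1, eLpNorm_one_eq_lintegral_enorm]
    have h3 : eLpNorm (v • w) 1 (volume : Measure ℝ)
        ≤ eLpNorm v 2 (volume : Measure ℝ) * eLpNorm w 2 (volume : Measure ℝ) :=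
      eLpNorm_smul_le_mul_eLpNorm hwm hv.1
    have hfin : eLpNorm v 2 (volume : Measure ℝ) * eLpNorm w 2 (volume : Measure ℝ) ≠ ⊤ :=
      ENNReal.mul_ne_top hv.2.ne hwfin.ne
    have h4 : (eLpNorm (v • w) 1 (volume : Measure ℝ)).toReal
        ≤ (eLpNorm v 2 (volume : Measure ℝ) * eLpNorm w 2 (volume : Measure ℝ)).toReal :=
      ENNReal.toReal_mono hfin h3
    have h5 : (eLpNorm v 2 (volume : Measure ℝ) * eLpNorm w 2 (volume : Measure ℝ)).toReal
        = B * (L4C u) ^ 2 := by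
      rw [ENNReal.toReal_mul, hweq, ← ENNReal.toReal_rpow]
      rw [show ((eLpNorm u 4 (volume : Measure ℝ)).toReal) ^ (2:ℝ)
          = ((eLpNorm u 4 (volume : Measure ℝ)).toReal) ^ (2:ℕ) by
        rw [← Real.rpow_natCast _ 2]; norm_num]
      rfl
    calc |∫ x : ℝ, v x * ‖u x‖ ^ 2| ≤ ∫ x : ℝ, ‖v x * ‖u x‖ ^ 2‖ := h1
      _ = (eLpNorm (v • w) 1 (volume : Measure ℝ)).toReal := h2
      _ ≤ (eLpNorm v 2 (volume : Measure ℝ) * eLpNorm w 2 (volume : Measure ℝ)).toReal := h4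
      _ = B * (L4C u) ^ 2 := h5
  -- main energy inequality with the Hölder bound
  have hE1 : A ^ 2 + B ^ 2 ≤ 2 * (B * (L4C u) ^ 2) + E₀ := by
    have : -2 * (∫ x : ℝ, v x * ‖u x‖ ^ 2) ≤ 2 * (B * (L4C u) ^ 2) := by
      have := neg_abs_le (∫ x : ℝ, v x * ‖u x‖ ^ 2)
      nlinarith [habs]
    linarith [hE]
  -- substitution s = A^{1/4}, ρ = r^{3/4}
  set s : ℝ := A ^ ((1:ℝ)/4) with hsdef
  set t : ℝ := K ^ ((3:ℝ)/4) with htdef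
  set ρ : ℝ := r ^ ((3:ℝ)/4) with hρdef
  have hs0 : 0 ≤ s := Real.rpow_nonneg hA0 _
  have ht0 : 0 ≤ t := Real.rpow_nonneg hK0 _
  have hρ0 : 0 ≤ ρ := Real.rpow_nonneg hr _
  have hs4 : s ^ 4 = A := by
    rw [hsdef, ← Real.rpow_natCast (A ^ ((1:ℝ)/4)) 4, ← Real.rpow_mul hA0]
    norm_num
  have hρ4 : ρ ^ 4 = r ^ 3 := by
    rw [hρdef, ← Real.rpow_natCast (r ^ ((3:ℝ)/4)) 4, ← Real.rpow_mul hr]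
    rw [show ((3:ℝ)/4) * ((4:ℕ):ℝ) = ((3:ℕ):ℝ) by push_cast; ring, Real.rpow_natCast]
  have htρ : t ≤ ρ := Real.rpow_le_rpow hK0 hu2 (by norm_num)
  -- Gagliardo–Nirenberg
  have hGN2 : (L4C u) ^ 2 ≤ (C * ρ * s) ^ 2 := by
    have h1 : L4C u ≤ C * t * s := hGN
    have h2 : C * t * s ≤ C * ρ * s := by
      have : C * t ≤ C * ρ := mul_le_mul_of_nonneg_left htρ hC
      exact mul_le_mul_of_nonneg_right this hs0
    exact pow_le_pow_left₀ hL40 (h1.trans h2) 2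
  have hE2 : A ^ 2 + B ^ 2 ≤ 2 * (B * (C * ρ * s) ^ 2) + E₀ := by
    nlinarith [mul_le_mul_of_nonneg_left hGN2 hB0]
  have hr6 : r ^ 6 = ρ ^ 8 := by
    rw [show (8:ℕ) = 4 * 2 by norm_num, pow_mul, hρ4]; ring
  rw [hr6, ← hs4]
  rw [← hs4] at hE2
  nlinarith [sq_nonneg (B - 2 * C^2 * ρ^2 * s^2), sq_nonneg (s^4 - 2 * C^4 * ρ^4),
    hB0, hs0, hρ0, hC, hE2]
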